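/- Suppose potential outcomes Y0(0), Y1(0) ∈ {0,1}, everyone is untreated at t=0 (D0 = 0 a.s.), period-1 treatment is perfect selection on the realized past outcome, D1 = 1 − Y0(0), and P(Y0(0) = 0) ∈ (0,1). Then the parallel trends condition E[Y1(0) − Y0(0) | D1 = 1] = E[Y1(0) − Y0(0) | D1 = 0] holds if and only if Y0(0) = Y1(0) almost surely. -/
import Mathlib


open MeasureTheory ProbabilityTheory

/-- Conditional expectation of a real random variable `Y` given the event `A`. -/
noncomputable def cexp {Ω : Type*} [MeasurableSpace Ω] (μ : Measure Ω) (A : Set Ω)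
    (Y : Ω → ℝ) : ℝ := ∫ ω, Y ω ∂(μ[|A])

/-- Selection on past outcomes: with binary outcomes, `D0 = 0`, and perfect selection
`D1 = 1 - Y0(0)`, parallel trends holds iff the untreated potential outcome does not
vary over time almost surely. -/
theorem stmt_2 {Ω : Type*} [MeasurableSpace Ω] (μ : Measure Ω) [IsProbabilityMeasure μ]
    (Y0 Y1 : Ω → ℝ) (D0 D1 : Ω → ℝ)
    (hY0bin : ∀ ω, Y0 ω = 0 ∨ Y0 ω = 1) (hY1bin : ∀ ω, Y1 ω = 0 ∨ Y1 ω = 1)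
    (hY0m : Measurable Y0) (hY1m : Measurable Y1)
    (hD0 : ∀ ω, D0 ω = 0) (hD1 : ∀ ω, D1 ω = 1 - Y0 ω)
    (hpos0 : 0 < μ {ω | D1 ω = 0}) (hpos1 : 0 < μ {ω | D1 ω = 1}) :
    (cexp μ {ω | D1 ω = 1} (fun ω => Y1 ω - Y0 ω)
      = cexp μ {ω | D1 ω = 0} (fun ω => Y1 ω - Y0 ω))
    ↔ (∀ᵐ ω ∂μ, Y0 ω = Y1 ω) := by
  -- identify the events with level sets of Y0
  have hA : {ω | D1 ω = 1} = {ω | Y0 ω = 0} := by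
    ext ω; simp only [Set.mem_setOf_eq, hD1 ω]
    constructor <;> intro h <;> linarith
  have hB : {ω | D1 ω = 0} = {ω | Y0 ω = 1} := by
    ext ω; simp only [Set.mem_setOf_eq, hD1 ω]
    constructor <;> intro h <;> linarith
  set A : Set Ω := {ω | Y0 ω = 0} with hAdef
  set B : Set Ω := {ω | Y0 ω = 1} with hBdef
  have hAm : MeasurableSet A := hY0m (measurableSet_singleton 0)
  have hBm : MeasurableSet B := hY0m (measurableSet_singleton 1)
  rw [hA] at hpos1 ⊢
  rw [hB] at hpos0 ⊢
  have hAne : μ A ≠ 0 := hpos1.ne'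
  have hBne : μ B ≠ 0 := hpos0.ne'
  have hAfin : μ A ≠ ⊤ := (measure_lt_top μ A).ne
  have hBfin : μ B ≠ ⊤ := (measure_lt_top μ B).ne
  have hcA : (0:ℝ) < ((μ A)⁻¹).toReal := by
    rw [ENNReal.toReal_inv]
    exact inv_pos.2 (ENNReal.toReal_pos hAne hAfin)
  have hcB : (0:ℝ) < ((μ B)⁻¹).toReal := by
    rw [ENNReal.toReal_inv]
    exact inv_pos.2 (ENNReal.toReal_pos hBne hBfin)
  -- integrability of Y1 and 1 - Y1
  have hY1bd : ∀ᵐ ω ∂μ, ‖Y1 ω‖ ≤ (1:ℝ) := by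
    filter_upwards with ω
    rcases hY1bin ω with h | h <;> simp [h]
  have hY1int : Integrable Y1 μ :=
    Integrable.mono' (integrable_const 1) hY1m.aestronglyMeasurable hY1bd
  -- rewrite the conditional expectations
  have exA : cexp μ A (fun ω => Y1 ω - Y0 ω)
      = ((μ A)⁻¹).toReal * ∫ ω in A, Y1 ω ∂μ := by
    rw [cexp, ProbabilityTheory.cond, integral_smul_measure,
      setIntegral_congr_fun hAm (g := Y1) (fun ω hω => by
        simp only [hAdef, Set.mem_setOf_eq] at hω; simp [hω])]
    simp
  have exB : cexp μ B (fun ω => Y1 ω - Y0 ω)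
      = ((μ B)⁻¹).toReal * ∫ ω in B, (Y1 ω - 1) ∂μ := by
    rw [cexp, ProbabilityTheory.cond, integral_smul_measure,
      setIntegral_congr_fun hBm (g := fun ω => Y1 ω - 1) (fun ω hω => by
        simp only [hBdef, Set.mem_setOf_eq] at hω; simp [hω])]
    simp
  constructor
  · intro h
    rw [exA, exB] at h
    -- LHS ≥ 0, RHS ≤ 0
    have hIA : 0 ≤ ∫ ω in A, Y1 ω ∂μ := by
      apply setIntegral_nonneg hAm
      intro ω _; rcases hY1bin ω with h' | h' <;> simp [h']
    have hIB : ∫ ω in B, (Y1 ω - 1) ∂μ ≤ 0 := by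
      apply setIntegral_nonpos hBm
      intro ω _; rcases hY1bin ω with h' | h' <;> simp [h']
    have hL0 : 0 ≤ ((μ A)⁻¹).toReal * ∫ ω in A, Y1 ω ∂μ :=
      mul_nonneg hcA.le hIA
    have hR0 : ((μ B)⁻¹).toReal * ∫ ω in B, (Y1 ω - 1) ∂μ ≤ 0 :=
      mul_nonpos_of_nonneg_of_nonpos hcB.le hIB
    have hIA0 : ∫ ω in A, Y1 ω ∂μ = 0 := by
      have : ((μ A)⁻¹).toReal * ∫ ω in A, Y1 ω ∂μ = 0 :=
        le_antisymm (h ▸ hR0) hL0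
      exact (mul_eq_zero.1 this).resolve_left hcA.ne'
    have hIB0 : ∫ ω in B, (Y1 ω - 1) ∂μ = 0 := by
      have : ((μ B)⁻¹).toReal * ∫ ω in B, (Y1 ω - 1) ∂μ = 0 :=
        le_antisymm hR0 (h ▸ hL0)
      exact (mul_eq_zero.1 this).resolve_left hcB.ne'
    -- deduce Y1 = 0 a.e. on A
    have hAae : ∀ᵐ ω ∂μ, ω ∈ A → Y1 ω = 0 := by
      have h0 : Y1 =ᶠ[ae (μ.restrict A)] 0 :=
        (integral_eq_zero_iff_of_nonneg
          (fun ω => by rcases hY1bin ω with h' | h' <;> simp [h'])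
          hY1int.restrict).1 hIA0
      rw [← ae_restrict_iff' hAm]
      filter_upwards [h0] with ω hω using hω
    -- deduce Y1 = 1 a.e. on B
    have hBae : ∀ᵐ ω ∂μ, ω ∈ B → Y1 ω = 1 := by
      have h0 : (fun ω => 1 - Y1 ω) =ᶠ[ae (μ.restrict B)] 0 := by
        refine (integral_eq_zero_iff_of_nonneg
          (fun ω => by rcases hY1bin ω with h' | h' <;> simp [h']) ?_).1 ?_
        · exact ((integrable_const (1:ℝ)).sub hY1int).restrict
        · rw [integral_sub (μ := μ.restrict B) (integrable_const (1:ℝ)).restrict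
            hY1int.restrict]
          have h2 : (∫ ω in B, Y1 ω ∂μ) - ∫ ω in B, (1:ℝ) ∂μ = 0 := by
            rw [← integral_sub hY1int.restrict (integrable_const (1:ℝ)).restrict]
            exact hIB0
          linarith
      rw [← ae_restrict_iff' hBm]
      filter_upwards [h0] with ω hω
      have h2 : 1 - Y1 ω = 0 := hω
      linarith
    filter_upwards [hAae, hBae] with ω h1 h2
    rcases hY0bin ω with h' | h'
    · rw [h', (h1 h')]
    · rw [h', (h2 h')]
  · intro h
    have hzero : ∀ μ' : Measure Ω, μ' ≪ μ →
        ∫ ω, (Y1 ω - Y0 ω) ∂μ' = 0 := by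
      intro μ' hac
      have : (fun ω => Y1 ω - Y0 ω) =ᶠ[ae μ'] 0 := by
        filter_upwards [hac.ae_le h] with ω hω
        simp [hω]
      rw [integral_congr_ae this]; simp
    rw [cexp, cexp, hzero _ cond_absolutelyContinuous,
      hzero _ cond_absolutelyContinuous]
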